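/- Let κ > 0, β > 0, ν > 0, U₀ > 0 be real constants with c² − ν² > 0, and define U : ℝ → ℝ by U(ξ) = (c² − ν²) / ( U₀ (c² − ν²) exp( −(c² − ν²) ξ / (β ν) ) + κ ν² ). Then U is a shock-wave profile: U(ξ) → 0 and U′(ξ) → 0 as ξ → −∞, while U(ξ) → (c² − ν²)/(κ ν²) and U′(ξ) → 0 as ξ → +∞. Moreover U(ξ) > 0 for all ξ (the solution is non-singular). -/

import Mathlib

open Filter

/-- The explicit travelling wave profile
`U(ξ) = (c² − ν²)/(U₀ (c² − ν²) e^{−(c²−ν²)ξ/(βν)} + κ ν²)` is a shock wave: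
it is everywhere positive, tends to `0` with vanishing derivative as `ξ → −∞`,
and tends to `(c² − ν²)/(κ ν²)` with vanishing derivative as `ξ → +∞`. -/
theorem shock_wave_profile
    (κ β ν c U₀ : ℝ)
    (hκ : κ > 0) (hβ : β > 0) (hν : ν > 0) (hU₀ : U₀ > 0)
    (hc : c ^ 2 - ν ^ 2 > 0) :
    let U : ℝ → ℝ := fun ξ =>
      (c ^ 2 - ν ^ 2) /
        (U₀ * (c ^ 2 - ν ^ 2) * Real.exp (-(c ^ 2 - ν ^ 2) * ξ / (β * ν)) + κ * ν ^ 2)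
    Tendsto U atBot (nhds 0) ∧
    Tendsto (deriv U) atBot (nhds 0) ∧
    Tendsto U atTop (nhds ((c ^ 2 - ν ^ 2) / (κ * ν ^ 2))) ∧
    Tendsto (deriv U) atTop (nhds 0) ∧
    ∀ ξ : ℝ, U ξ > 0 := by
  intro U
  set a := c ^ 2 - ν ^ 2 with ha
  have hbν : (0:ℝ) < β * ν := mul_pos hβ hν
  have hk : (0:ℝ) < κ * ν ^ 2 := mul_pos hκ (pow_pos hν 2)
  set r : ℝ := -a / (β * ν) with hr
  have hrneg : r < 0 := div_neg_of_neg_of_pos (neg_neg_iff_pos.mpr hc) hbν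
  set E : ℝ → ℝ := fun ξ => Real.exp (r * ξ) with hE
  set f : ℝ → ℝ := fun ξ => U₀ * a * E ξ + κ * ν ^ 2 with hf
  have hEpos : ∀ ξ, 0 < E ξ := fun ξ => Real.exp_pos _
  have hUa : (0:ℝ) < U₀ * a := mul_pos hU₀ hc
  have hfpos : ∀ ξ, 0 < f ξ := fun ξ => add_pos (mul_pos hUa (hEpos ξ)) hk
  have hUeq : U = fun ξ => a / f ξ := by
    funext ξ
    show a / (U₀ * a * Real.exp (-a * ξ / (β * ν)) + κ * ν ^ 2) = _
    rw [hf, hE]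
    congr 3
    rw [hr]; ring
  set C := a * (U₀ * a * (-r)) with hC
  have hCpos : 0 < C := mul_pos hc (mul_pos hUa (neg_pos.mpr hrneg))
  have hEderiv : ∀ ξ, HasDerivAt E (E ξ * r) ξ := by
    intro ξ
    simpa using ((hasDerivAt_id ξ).const_mul r).exp
  have hfderiv : ∀ ξ, HasDerivAt f (U₀ * a * (E ξ * r)) ξ :=
    fun ξ => ((hEderiv ξ).const_mul (U₀ * a)).add_const _
  clear_value r
  clear_value a
  have hUderiv : ∀ ξ, HasDerivAt U (C * E ξ / f ξ ^ 2) ξ := by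
    intro ξ
    have h := (hasDerivAt_const ξ a).div (hfderiv ξ) (ne_of_gt (hfpos ξ))
    rw [hUeq]
    refine h.congr_deriv (Eq.symm ?_)
    rw [hC]
    field_simp
    ring
  have hderivU : deriv U = fun ξ => C * E ξ / f ξ ^ 2 := by
    funext ξ; exact (hUderiv ξ).deriv
  have hEbot : Tendsto E atBot atTop :=
    Real.tendsto_exp_atTop.comp (tendsto_id.const_mul_atBot_of_neg hrneg)
  have hEtop : Tendsto E atTop (nhds 0) :=
    Real.tendsto_exp_atBot.comp (tendsto_id.const_mul_atTop_of_neg hrneg)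
  have hfbot : Tendsto f atBot atTop :=
    tendsto_atTop_add_const_right _ _ (hEbot.const_mul_atTop hUa)
  have hftop : Tendsto f atTop (nhds (κ * ν ^ 2)) := by
    have h := (hEtop.const_mul (U₀ * a)).add_const (κ * ν ^ 2)
    simpa using h
  refine ⟨?_, ?_, ?_, ?_, ?_⟩
  · rw [hUeq]
    exact tendsto_const_nhds.div_atTop hfbot
  · rw [hderivU]
    have hbound : ∀ ξ : ℝ, C * E ξ / f ξ ^ 2 ≤ C / ((U₀ * a) ^ 2 * E ξ) := by
      intro ξ
      rw [div_le_div_iff₀ (by positivity) (by positivity)]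
      have h1 : U₀ * a * E ξ ≤ f ξ := le_add_of_nonneg_right hk.le
      have h2 : (U₀ * a * E ξ) ^ 2 ≤ f ξ ^ 2 := by
        apply pow_le_pow_left₀ (by positivity) h1
      calc C * E ξ * ((U₀ * a) ^ 2 * E ξ) = C * ((U₀ * a * E ξ) ^ 2) := by ring
        _ ≤ C * f ξ ^ 2 := by nlinarith
    have hupper : Tendsto (fun ξ => C / ((U₀ * a) ^ 2 * E ξ)) atBot (nhds 0) :=
      tendsto_const_nhds.div_atTop (hEbot.const_mul_atTop (by positivity))
    exact tendsto_of_tendsto_of_tendsto_of_le_of_le tendsto_const_nhds hupper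
      (fun ξ => by positivity) hbound
  · rw [hUeq]
    exact tendsto_const_nhds.div hftop (ne_of_gt hk)
  · rw [hderivU]
    have h := (hEtop.const_mul C).mul ((hftop.pow 2).inv₀ (by positivity))
    simp only [div_eq_mul_inv]
    simpa using h
  · intro ξ
    rw [hUeq]
    exact div_pos hc (hfpos ξ)
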